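/- Excess empirical risk of the exponential mechanism on the regularized loss (intermediate step in the proof of Theorem 5.3). There is a universal constant c > 0 such that the following holds. Let C ⊆ ℝ^p be a compact convex set containing the origin, with diameter ‖C‖ > 0 and positive Lebesgue measure, and suppose that for every d ∈ τ the map θ ↦ ℓ(θ; d) is convex and L-Lipschitz on C. Fix ε > 0, m with 0 < m ≤ L/‖C‖, and a dataset D of size n. Let L′ = L + m‖C‖ (an upper bound on the Lipschitz constant on C of the regularized loss), and let ν_D be the Gibbs measure on C with density proportional to exp(−(εn/(2L′‖C‖))·(𝓛(θ; D) + (m/2)‖θ‖²)). Then E_{θ ∼ ν_D}[𝓛(θ; D)] − min_{θ ∈ C} 𝓛(θ; D) ≤ c·(Lp‖C‖/(εn) + m‖C‖²). -/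

import Mathlib

open scoped NNReal ENNReal
open Set


open MeasureTheory Real

noncomputable section
set_option maxHeartbeats 1000000

/-- ℝ^p as a Euclidean space. -/
abbrev Eu (p : ℕ) := EuclideanSpace ℝ (Fin p)

/-- The Gibbs measure on `C` with inverse temperature `β` for the potential `F`:
the probability measure whose density with respect to Lebesgue measure restricted
to `C` is proportional to `exp (-β * F θ)`. -/
def gibbs {p : ℕ} (C : Set (Eu p)) (β : ℝ) (F : Eu p → ℝ) : Measure (Eu p) :=
  (∫⁻ θ in C, ENNReal.ofReal (Real.exp (-β * F θ)))⁻¹ •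
    (volume.restrict C).withDensity fun θ => ENNReal.ofReal (Real.exp (-β * F θ))

/-- The empirical loss `𝓛(θ; D) = (1/n) ∑ i, ℓ(θ; dᵢ)`. -/
def empLoss {p n : ℕ} {τ : Type*} (ℓ : Eu p → τ → ℝ) (D : Fin n → τ) (θ : Eu p) : ℝ :=
  (1 / (n : ℝ)) * ∑ i, ℓ θ (D i)

lemma convexOn_finsum {p : ℕ} {ι : Type*} (t : Finset ι) {s : Set (Eu p)} (hs : Convex ℝ s)
    (f : ι → Eu p → ℝ) (h : ∀ i ∈ t, ConvexOn ℝ s (f i)) :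
    ConvexOn ℝ s (fun x => ∑ i ∈ t, f i x) := by
  classical
  induction t using Finset.induction_on with
  | empty => simpa using convexOn_const 0 hs
  | @insert a t' hnot ih =>
    simp only [Finset.sum_insert hnot]
    exact (h a (Finset.mem_insert_self _ _)).add
      (ih fun i hi => h i (Finset.mem_insert_of_mem hi))

-- gibbs integral formula
lemma gibbs_integral {p : ℕ} {C : Set (Eu p)} (hC : IsCompact C)
    {F : Eu p → ℝ} (hFc : ContinuousOn F C) {β : ℝ}
    (g : Eu p → ℝ) :
    ∫ θ, g θ ∂(gibbs C β F) =
      ((∫⁻ θ in C, ENNReal.ofReal (Real.exp (-β * F θ))).toReal)⁻¹ *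
        ∫ θ in C, Real.exp (-β * F θ) * g θ := by
  rw [gibbs, integral_smul_measure, ENNReal.toReal_inv]
  congr 1
  have hf : AEMeasurable (fun θ => Real.toNNReal (Real.exp (-β * F θ))) (volume.restrict C) := by
    apply measurable_real_toNNReal.comp_aemeasurable
    exact (Real.continuous_exp.comp_continuousOn
      (continuousOn_const.mul hFc)).aemeasurable hC.measurableSet
  rw [show (fun θ => ENNReal.ofReal (Real.exp (-β * F θ)))
      = (fun θ => ((Real.toNNReal (Real.exp (-β * F θ)) : ℝ≥0) : ℝ≥0∞)) from rfl,
    integral_withDensity_eq_integral_smul₀ hf g]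
  apply setIntegral_congr_fun hC.measurableSet
  intro θ _
  simp [NNReal.smul_def, Real.coe_toNNReal _ (Real.exp_nonneg _)]

lemma gibbs_key {p : ℕ} (hp : 1 ≤ p) {C : Set (Eu p)} (hC : IsCompact C) (hconv : Convex ℝ C)
    {F : Eu p → ℝ} (hFc : ContinuousOn F C) (hFcv : ConvexOn ℝ C F)
    {θ₀ : Eu p} (hθ₀ : θ₀ ∈ C) (hmin : ∀ θ ∈ C, F θ₀ ≤ F θ)
    {β : ℝ} (hβ : 0 < β) :
    ∫ θ in C, (F θ - F θ₀) * Real.exp (-β * F θ) ≤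
      (2 * p / β) * ∫ θ in C, Real.exp (-β * F θ) := by
  have hp1 : (1:ℝ) ≤ p := by exact_mod_cast hp
  set s : ℝ := 1 - (2 * p : ℝ)⁻¹ with hs_def
  have h2p : (0:ℝ) < 2 * p := by linarith
  have hinvle : (2 * (p:ℝ))⁻¹ ≤ 2⁻¹ := by
    apply inv_anti₀ (by norm_num)
    linarith
  have hinvpos : (0:ℝ) < (2 * (p:ℝ))⁻¹ := by positivity
  have hs0 : 0 < s := by rw [hs_def]; norm_num at hinvle ⊢; linarith
  have hs1 : s < 1 := by rw [hs_def]; linarith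
  have hps1 : (p:ℝ) * (s - 1) = -(1/2) := by
    rw [hs_def]; field_simp; ring
  have hB := one_add_mul_le_pow (a := s - 1) (by nlinarith) p
  rw [show (1:ℝ) + (s - 1) = s by ring] at hB
  have hsp_half : (1:ℝ)/2 ≤ s ^ p := by rw [hps1] at hB; linarith
  have hsp_pos : (0:ℝ) < s ^ p := by positivity
  have hsp_le1 : s ^ p ≤ 1 := pow_le_one₀ hs0.le hs1.le
  have h1sp : 1 - s ^ p ≤ p * (1 - s) := by nlinarith [hB]
  -- the scaling map
  set T : Eu p → Eu p := fun y => s • y + (1 - s) • θ₀ with hT_def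
  have hTC : T '' C ⊆ C := by
    rintro - ⟨y, hy, rfl⟩
    exact hconv hy hθ₀ hs0.le (by linarith) (by ring)
  have hTmaps : ∀ x ∈ C, T x ∈ C := fun x hx => hTC ⟨x, hx, rfl⟩
  -- continuity / integrability
  have hw : ContinuousOn (fun θ => Real.exp (-β * F θ)) C :=
    Real.continuous_exp.comp_continuousOn (continuousOn_const.mul hFc)
  have hwi : IntegrableOn (fun θ => Real.exp (-β * F θ)) C := hw.integrableOn_compact hC
  have hGwi : IntegrableOn (fun θ => (F θ - F θ₀) * Real.exp (-β * F θ)) C :=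
    ((hFc.sub continuousOn_const).mul hw).integrableOn_compact hC
  set Z : ℝ := ∫ θ in C, Real.exp (-β * F θ) with hZ_def
  set I : ℝ := ∫ θ in C, (F θ - F θ₀) * Real.exp (-β * F θ) with hI_def
  have hZ0 : 0 ≤ Z := setIntegral_nonneg hC.measurableSet fun θ _ => (Real.exp_pos _).le
  have hI0 : 0 ≤ I := setIntegral_nonneg hC.measurableSet fun θ hθ =>
    mul_nonneg (by linarith [hmin θ hθ]) (Real.exp_pos _).le
  -- change of variables
  have hderiv : ∀ x ∈ C, HasFDerivWithinAt T (s • (ContinuousLinearMap.id ℝ (Eu p))) C x :=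
    fun x _ => (((hasFDerivAt_id x).const_smul s).add_const _).hasFDerivWithinAt
  have hinj : InjOn T C := by
    intro a _ b _ hab
    have h : s • a = s • b := by
      have := hab
      simp only [hT_def, add_left_inj] at this
      exact this
    exact smul_right_injective _ (ne_of_gt hs0) h
  have hdet : |(s • (ContinuousLinearMap.id ℝ (Eu p))).det| = s ^ p := by
    rw [ContinuousLinearMap.det]
    simp only [ContinuousLinearMap.coe_smul, ContinuousLinearMap.coe_id, LinearMap.det_smul,
      LinearMap.det_id, mul_one, finrank_euclideanSpace_fin]
    exact abs_of_pos hsp_pos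
  have hcov : ∫ x in T '' C, Real.exp (-β * F x) =
      ∫ x in C, s ^ p * Real.exp (-β * F (T x)) := by
    rw [integral_image_eq_integral_abs_det_fderiv_smul volume hC.measurableSet hderiv hinj]
    simp [hdet, smul_eq_mul]
  -- step 1 : Z ≥ ∫ over image
  have h1 : ∫ x in T '' C, Real.exp (-β * F x) ≤ Z := by
    apply setIntegral_mono_set hwi
    · filter_upwards with θ using (Real.exp_pos _).le
    · exact HasSubset.Subset.eventuallyLE hTC
  -- pointwise bound on C
  have hpt : ∀ x ∈ C, Real.exp (-β * F x) * (1 + β * (1 - s) * (F x - F θ₀))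
      ≤ Real.exp (-β * F (T x)) := by
    intro x hx
    have hFT : F (T x) ≤ s * F x + (1 - s) * F θ₀ := by
      have := hFcv.2 hx hθ₀ hs0.le (by linarith : (0:ℝ) ≤ 1 - s) (by ring)
      simpa [hT_def, smul_eq_mul] using this
    have h2 : Real.exp (-β * (s * F x + (1 - s) * F θ₀)) ≤ Real.exp (-β * F (T x)) := by
      apply Real.exp_le_exp.mpr
      nlinarith
    have h3 : -β * (s * F x + (1 - s) * F θ₀) = -β * F x + β * (1 - s) * (F x - F θ₀) := by ring
    have h4 : Real.exp (-β * F x) * (1 + β * (1 - s) * (F x - F θ₀))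
        ≤ Real.exp (-β * F x) * Real.exp (β * (1 - s) * (F x - F θ₀)) :=
      mul_le_mul_of_nonneg_left
        (by linarith [Real.add_one_le_exp (β * (1 - s) * (F x - F θ₀))]) (Real.exp_pos _).le
    calc Real.exp (-β * F x) * (1 + β * (1 - s) * (F x - F θ₀))
        ≤ Real.exp (-β * F x) * Real.exp (β * (1 - s) * (F x - F θ₀)) := h4
      _ = Real.exp (-β * (s * F x + (1 - s) * F θ₀)) := by rw [← Real.exp_add, h3]
      _ ≤ Real.exp (-β * F (T x)) := h2
  have hTcont : ContinuousOn T C :=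
    ((continuous_id.const_smul s).add continuous_const).continuousOn
  have hwTi : IntegrableOn (fun x => Real.exp (-β * F (T x))) C :=
    (Real.continuous_exp.comp_continuousOn
      (continuousOn_const.mul (hFc.comp hTcont hTmaps))).integrableOn_compact hC
  -- step 2 : lower bound the transported integral
  have h2 : ∫ x in C, s ^ p * (Real.exp (-β * F x) * (1 + β * (1 - s) * (F x - F θ₀)))
      ≤ ∫ x in C, s ^ p * Real.exp (-β * F (T x)) := by
    apply setIntegral_mono_on
    · apply Integrable.const_mul
      have he : (fun x => Real.exp (-β * F x) * (1 + β * (1 - s) * (F x - F θ₀))) =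
          fun x => Real.exp (-β * F x) + (β * (1 - s)) * ((F x - F θ₀) * Real.exp (-β * F x)) := by
        funext x; ring
      rw [he]
      exact hwi.add (hGwi.const_mul _)
    · exact hwTi.const_mul _
    · exact hC.measurableSet
    · intro x hx
      exact mul_le_mul_of_nonneg_left (hpt x hx) hsp_pos.le
  -- expand left of h2
  have hexp : ∫ x in C, s ^ p * (Real.exp (-β * F x) * (1 + β * (1 - s) * (F x - F θ₀)))
      = s ^ p * (Z + β * (1 - s) * I) := by
    have he : (fun x => s ^ p * (Real.exp (-β * F x) * (1 + β * (1 - s) * (F x - F θ₀)))) =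
        fun x => s ^ p * Real.exp (-β * F x) +
          (s ^ p * (β * (1 - s))) * ((F x - F θ₀) * Real.exp (-β * F x)) := by
      funext x; ring
    rw [he, integral_add ((hwi.const_mul _)) ((hGwi.const_mul _)),
      integral_const_mul, integral_const_mul, ← hZ_def, ← hI_def]
    ring
  -- combine
  have hmain : s ^ p * (Z + β * (1 - s) * I) ≤ Z := by
    calc s ^ p * (Z + β * (1 - s) * I)
        = ∫ x in C, s ^ p * (Real.exp (-β * F x) * (1 + β * (1 - s) * (F x - F θ₀))) := hexp.symm
      _ ≤ ∫ x in C, s ^ p * Real.exp (-β * F (T x)) := h2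
      _ = ∫ x in T '' C, Real.exp (-β * F x) := hcov.symm
      _ ≤ Z := h1
  have h1s : 0 < 1 - s := by linarith
  have hmulZ : (1 - s ^ p) * Z ≤ (p * (1 - s)) * Z := mul_le_mul_of_nonneg_right h1sp hZ0
  have hstep : (s ^ p * (β * I)) * (1 - s) ≤ (p * Z) * (1 - s) := by nlinarith [hmain, hmulZ]
  have h5 : s ^ p * (β * I) ≤ p * Z := le_of_mul_le_mul_right hstep h1s
  have hβI0 : 0 ≤ β * I := mul_nonneg hβ.le hI0
  have hhalf : (1/2) * (β * I) ≤ s ^ p * (β * I) := mul_le_mul_of_nonneg_right hsp_half hβI0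
  have hβI : β * I ≤ 2 * p * Z := by linarith
  rw [div_mul_eq_mul_div, le_div_iff₀ hβ]
  calc I * β = β * I := mul_comm _ _
    _ ≤ 2 * p * Z := hβI

/-- excess empirical risk of the exponential mechanism on the
regularized loss (intermediate step in the proof of Theorem 5.3). -/
theorem exponential_mechanism_regularized_excess_risk :
    ∃ c : ℝ, 0 < c ∧
      ∀ (p n : ℕ), 1 ≤ p → 1 ≤ n → ∀ (τ : Type) (ℓ : Eu p → τ → ℝ),
      ∀ (C : Set (Eu p)), IsCompact C → Convex ℝ C → (0 : Eu p) ∈ C →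
        0 < Metric.diam C → 0 < volume C →
      ∀ (L : ℝ), 0 < L →
        (∀ d : τ, ConvexOn ℝ C (fun θ => ℓ θ d)) →
        (∀ d : τ, LipschitzOnWith L.toNNReal (fun θ => ℓ θ d) C) →
      ∀ (ε : ℝ), 0 < ε →
      ∀ (m : ℝ), 0 < m → m ≤ L / Metric.diam C →
      ∀ (D : Fin n → τ),
        (∫ θ, empLoss ℓ D θ
            ∂(gibbs C (ε * n / (2 * (L + m * Metric.diam C) * Metric.diam C))
              (fun θ => empLoss ℓ D θ + m / 2 * ‖θ‖ ^ 2))) -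
          sInf (empLoss ℓ D '' C) ≤
        c * (L * p * Metric.diam C / (ε * n) + m * Metric.diam C ^ 2) := by
  refine ⟨8, by norm_num, ?_⟩
  intro p n hp hn τ ℓ C hC hconv h0C hdiam hvol L hL hcv hLip ε hε m hm hmLd D
  set d : ℝ := Metric.diam C with hd_def
  have hn1 : (1:ℝ) ≤ n := by exact_mod_cast hn
  have hεn : 0 < ε * n := by positivity
  have hmd : m * d ≤ L := by
    rw [le_div_iff₀ hdiam] at hmLd; exact hmLd
  have hL' : 0 < L + m * d := by nlinarith
  set β : ℝ := ε * n / (2 * (L + m * d) * d) with hβ_def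
  have hβ : 0 < β := by
    apply div_pos hεn; positivity
  set 𝓛 : Eu p → ℝ := empLoss ℓ D with h𝓛_def
  set F : Eu p → ℝ := fun θ => 𝓛 θ + m / 2 * ‖θ‖ ^ 2 with hF_def
  -- continuity
  have h𝓛c : ContinuousOn 𝓛 C := by
    rw [h𝓛_def]
    unfold empLoss
    exact continuousOn_const.mul
      (continuousOn_finset_sum _ fun i _ => (hLip (D i)).continuousOn)
  have hFc : ContinuousOn F C :=
    h𝓛c.add (continuousOn_const.mul ((continuous_norm.pow 2).continuousOn))
  -- convexity
  have h𝓛cv : ConvexOn ℝ C 𝓛 := by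
    rw [h𝓛_def]
    unfold empLoss
    have hsum := convexOn_finsum Finset.univ hconv (fun i θ => ℓ θ (D i))
      (fun i _ => hcv (D i))
    have h := hsum.smul (c := 1 / (n:ℝ)) (by positivity)
    simpa [smul_eq_mul] using h
  have hsqcv : ConvexOn ℝ C (fun θ : Eu p => ‖θ‖ ^ 2) := by
    refine ⟨hconv, fun x _ y _ a b ha hb hab => ?_⟩
    have h1 : ‖a • x + b • y‖ ≤ a * ‖x‖ + b * ‖y‖ := by
      calc ‖a • x + b • y‖ ≤ ‖a • x‖ + ‖b • y‖ := norm_add_le _ _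
        _ = a * ‖x‖ + b * ‖y‖ := by
            rw [norm_smul, norm_smul, Real.norm_eq_abs, Real.norm_eq_abs,
              abs_of_nonneg ha, abs_of_nonneg hb]
    have h2 : ‖a • x + b • y‖ ^ 2 ≤ (a * ‖x‖ + b * ‖y‖) ^ 2 := by
      nlinarith [norm_nonneg (a • x + b • y)]
    simp only [smul_eq_mul]
    nlinarith [mul_nonneg ha hb, sq_nonneg (‖x‖ - ‖y‖)]
  have hFcv : ConvexOn ℝ C F := h𝓛cv.add ((hsqcv.smul (by positivity : (0:ℝ) ≤ m / 2)))
  -- minimizer of F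
  obtain ⟨θ₀, hθ₀C, hθ₀min⟩ := hC.exists_isMinOn ⟨0, h0C⟩ hFc
  have hmin : ∀ θ ∈ C, F θ₀ ≤ F θ := fun θ hθ => hθ₀min hθ
  -- norm bound on C
  have hnb : ∀ θ ∈ C, ‖θ‖ ≤ d := by
    intro θ hθ
    have := Metric.dist_le_diam_of_mem hC.isBounded hθ h0C
    simpa using this
  -- Z facts
  have hwc : ContinuousOn (fun θ => Real.exp (-β * F θ)) C :=
    Real.continuous_exp.comp_continuousOn (continuousOn_const.mul hFc)
  have hwi : IntegrableOn (fun θ => Real.exp (-β * F θ)) C := hwc.integrableOn_compact hC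
  set Z : ℝ := ∫ θ in C, Real.exp (-β * F θ) with hZ_def
  have hZpos : 0 < Z := by
    rw [hZ_def, setIntegral_pos_iff_support_of_nonneg_ae
      (by filter_upwards with θ using (Real.exp_pos _).le) hwi]
    have : (Function.support fun θ => Real.exp (-β * F θ)) = Set.univ := by
      ext θ; simp [Function.support, (Real.exp_pos _).ne']
    rw [this, Set.univ_inter]
    exact hvol
  have hZl : (∫⁻ θ in C, ENNReal.ofReal (Real.exp (-β * F θ))) = ENNReal.ofReal Z := by
    rw [hZ_def, ofReal_integral_eq_lintegral_ofReal hwi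
      (by filter_upwards with θ using (Real.exp_pos _).le)]
  -- the gibbs integral
  have hgi : ∫ θ, 𝓛 θ ∂(gibbs C β F) = Z⁻¹ * ∫ θ in C, Real.exp (-β * F θ) * 𝓛 θ := by
    rw [gibbs_integral hC hFc 𝓛, hZl, ENNReal.toReal_ofReal hZpos.le]
  -- integrability of products
  have h𝓛wi : IntegrableOn (fun θ => Real.exp (-β * F θ) * 𝓛 θ) C :=
    (hwc.mul h𝓛c).integrableOn_compact hC
  have hFwi : IntegrableOn (fun θ => Real.exp (-β * F θ) * F θ) C :=
    (hwc.mul hFc).integrableOn_compact hC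
  -- 𝓛 ≤ F on C
  have h𝓛F : ∫ θ in C, Real.exp (-β * F θ) * 𝓛 θ ≤ ∫ θ in C, Real.exp (-β * F θ) * F θ := by
    apply setIntegral_mono_on h𝓛wi hFwi hC.measurableSet
    intro θ hθ
    apply mul_le_mul_of_nonneg_left _ (Real.exp_pos _).le
    rw [hF_def]
    nlinarith [sq_nonneg ‖θ‖, hm]
  -- split ∫ w F
  have hsplit : ∫ θ in C, Real.exp (-β * F θ) * F θ
      = (∫ θ in C, (F θ - F θ₀) * Real.exp (-β * F θ)) + F θ₀ * Z := by
    have he : (fun θ => Real.exp (-β * F θ) * F θ)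
        = fun θ => (F θ - F θ₀) * Real.exp (-β * F θ) + F θ₀ * Real.exp (-β * F θ) := by
      funext θ; ring
    rw [he, integral_add (f := fun θ => (F θ - F θ₀) * Real.exp (-β * F θ)) (((hFc.sub continuousOn_const).mul hwc).integrableOn_compact hC)
      (hwi.const_mul _), integral_const_mul, ← hZ_def]
  -- key bound
  have hkey := gibbs_key hp hC hconv hFc hFcv hθ₀C hmin hβ
  rw [← hZ_def] at hkey
  -- E[𝓛] ≤ F θ₀ + 2p/β
  have hE : ∫ θ, 𝓛 θ ∂(gibbs C β F) ≤ F θ₀ + 2 * p / β := by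
    rw [hgi]
    have h6 : ∫ θ in C, Real.exp (-β * F θ) * 𝓛 θ ≤ (2 * p / β) * Z + F θ₀ * Z := by
      calc ∫ θ in C, Real.exp (-β * F θ) * 𝓛 θ
          ≤ ∫ θ in C, Real.exp (-β * F θ) * F θ := h𝓛F
        _ = (∫ θ in C, (F θ - F θ₀) * Real.exp (-β * F θ)) + F θ₀ * Z := hsplit
        _ ≤ (2 * p / β) * Z + F θ₀ * Z := by linarith [hkey]
    calc Z⁻¹ * ∫ θ in C, Real.exp (-β * F θ) * 𝓛 θ
        ≤ Z⁻¹ * ((2 * p / β) * Z + F θ₀ * Z) :=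
          mul_le_mul_of_nonneg_left h6 (inv_nonneg.mpr hZpos.le)
      _ = F θ₀ + 2 * p / β := by field_simp; ring
  -- sInf lower bound
  have hsInf : F θ₀ - m / 2 * d ^ 2 ≤ sInf (𝓛 '' C) := by
    apply le_csInf ⟨𝓛 0, Set.mem_image_of_mem _ h0C⟩
    rintro - ⟨θ, hθ, rfl⟩
    have h7 := hmin θ hθ
    have h8 : ‖θ‖ ≤ d := hnb θ hθ
    have h9 : m / 2 * ‖θ‖ ^ 2 ≤ m / 2 * d ^ 2 := by
      apply mul_le_mul_of_nonneg_left _ (by positivity)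
      nlinarith [norm_nonneg θ]
    rw [hF_def] at h7
    simp only at h7
    rw [show F θ₀ = 𝓛 θ₀ + m / 2 * ‖θ₀‖ ^ 2 from rfl]
    linarith
  -- final arithmetic
  have hfin : (∫ θ, 𝓛 θ ∂(gibbs C β F)) - sInf (𝓛 '' C) ≤ 2 * p / β + m / 2 * d ^ 2 := by
    linarith
  refine le_trans hfin ?_
  have hβval : 2 * (p:ℝ) / β = 4 * p * (L + m * d) * d / (ε * n) := by
    rw [hβ_def]
    field_simp
    ring
  rw [hβval]
  have hp1 : (1:ℝ) ≤ p := by exact_mod_cast hp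
  have hnum : 4 * (p:ℝ) * (L + m * d) * d ≤ 8 * (L * p * d) := by
    nlinarith [mul_le_mul_of_nonneg_left hmd
      (by positivity : (0:ℝ) ≤ 4 * (p:ℝ) * d)]
  have hdivle : 4 * (p:ℝ) * (L + m * d) * d / (ε * n) ≤ 8 * (L * p * d) / (ε * n) := by
    gcongr
  have h10 : m / 2 * d ^ 2 ≤ 8 * (m * d ^ 2) := by nlinarith [sq_nonneg d]
  have h11 : 8 * (L * (p:ℝ) * d) / (ε * n) = 8 * (L * p * d / (ε * n)) := by ring
  linarith

end
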